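/- arXiv:2407.03638 — 3 statements merged into one kernel-verified Lean document; each statement's English description precedes it below -/
import Mathlib

section
/- Let Σ be a finite alphabet and for each a ∈ Σ let Δ_a be a derivation of the polynomial ring ℚ[X_1,…,X_k] (the derivations need not commute). Fix α ∈ ℚ[X_1,…,X_k] and define the ideal I_n generated by all Δ_w α for words w of length at most n, where Δ_w is the composition of the Δ_a's along w. Then the chain I_0 ⊆ I_1 ⊆ ⋯ is convex: for all n ≥ 1, the colon ideal I_{n−1} : I_n is contained in I_n : I_{n+1}. -/
/-- Iterated application of the derivations along a word: `Δ_ε α = α`,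
`Δ_{a·w} α = Δ_w (Δ_a α)`. -/
noncomputable def deltaWord {d k : ℕ}
    (Δ : Fin d → Derivation ℚ (MvPolynomial (Fin k) ℚ) (MvPolynomial (Fin k) ℚ)) :
    List (Fin d) → MvPolynomial (Fin k) ℚ → MvPolynomial (Fin k) ℚ
  | [], α => α
  | a :: w, α => deltaWord Δ w (Δ a α)

/-- The ideal `I_n` generated by all `Δ_w α` for words `w` of length at most `n`. -/
noncomputable def idealChain {d k : ℕ}
    (Δ : Fin d → Derivation ℚ (MvPolynomial (Fin k) ℚ) (MvPolynomial (Fin k) ℚ))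
    (α : MvPolynomial (Fin k) ℚ) (n : ℕ) : Ideal (MvPolynomial (Fin k) ℚ) :=
  Ideal.span { p | ∃ w : List (Fin d), w.length ≤ n ∧ p = deltaWord Δ w α }

lemma deltaWord_append_singleton {d k : ℕ}
    (Δ : Fin d → Derivation ℚ (MvPolynomial (Fin k) ℚ) (MvPolynomial (Fin k) ℚ))
    (w : List (Fin d)) (a : Fin d) (α : MvPolynomial (Fin k) ℚ) :
    deltaWord Δ (w ++ [a]) α = Δ a (deltaWord Δ w α) := by
  induction w generalizing α with
  | nil => rfl
  | cons b w ih => simp [deltaWord, ih]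

lemma idealChain_mono {d k : ℕ}
    (Δ : Fin d → Derivation ℚ (MvPolynomial (Fin k) ℚ) (MvPolynomial (Fin k) ℚ))
    (α : MvPolynomial (Fin k) ℚ) {m n : ℕ} (h : m ≤ n) :
    idealChain Δ α m ≤ idealChain Δ α n :=
  Ideal.span_mono (fun _ ⟨w, hw, hp⟩ => ⟨w, hw.trans h, hp⟩)

lemma deltaWord_mem_idealChain {d k : ℕ}
    (Δ : Fin d → Derivation ℚ (MvPolynomial (Fin k) ℚ) (MvPolynomial (Fin k) ℚ))
    (α : MvPolynomial (Fin k) ℚ) {m : ℕ} {w : List (Fin d)} (hw : w.length ≤ m) :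
    deltaWord Δ w α ∈ idealChain Δ α m :=
  Ideal.subset_span ⟨w, hw, rfl⟩

lemma deriv_mem_idealChain {d k : ℕ}
    (Δ : Fin d → Derivation ℚ (MvPolynomial (Fin k) ℚ) (MvPolynomial (Fin k) ℚ))
    (α : MvPolynomial (Fin k) ℚ) (m : ℕ) (a : Fin d) {x : MvPolynomial (Fin k) ℚ}
    (hx : x ∈ idealChain Δ α m) : Δ a x ∈ idealChain Δ α (m + 1) := by
  refine Submodule.span_induction ?_ ?_ ?_ ?_ hx
  · rintro p ⟨w, hw, rfl⟩
    exact Ideal.subset_span ⟨w ++ [a], by simpa using hw,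
      (deltaWord_append_singleton Δ w a α).symm⟩
  · simp
  · exact fun x y _ _ hx hy => by rw [map_add]; exact add_mem hx hy
  · intro r x hxm hx
    rw [smul_eq_mul, Derivation.leibniz, smul_eq_mul, smul_eq_mul]
    exact add_mem (Ideal.mul_mem_left _ _ hx)
      (Ideal.mul_mem_right _ _ (idealChain_mono Δ α (Nat.le_succ m) hxm))

/-- Convexity of the ideal chain: for all `n ≥ 1`, the colon ideal `I_{n−1} : I_n`
is contained in `I_n : I_{n+1}`. -/
theorem idealChain_convex {d k : ℕ}
    (Δ : Fin d → Derivation ℚ (MvPolynomial (Fin k) ℚ) (MvPolynomial (Fin k) ℚ))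
    (α : MvPolynomial (Fin k) ℚ) (n : ℕ) (hn : 1 ≤ n)
    (f : MvPolynomial (Fin k) ℚ)
    (hf : ∀ g ∈ idealChain Δ α n, f * g ∈ idealChain Δ α (n - 1)) :
    ∀ h ∈ idealChain Δ α (n + 1), f * h ∈ idealChain Δ α n := by
  intro h hmem
  refine Submodule.span_induction ?_ ?_ ?_ ?_ hmem
  · rintro p ⟨w, hw, rfl⟩
    rcases le_or_gt w.length n with hle | hlt
    · exact idealChain_mono Δ α (Nat.sub_le n 1)
        (hf _ (deltaWord_mem_idealChain Δ α hle))
    · have hne : w ≠ [] := by rintro rfl; simp at hlt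
      obtain ⟨w', a, rfl⟩ : ∃ w' a, w = w' ++ [a] :=
        ⟨w.dropLast, w.getLast hne, (List.dropLast_append_getLast hne).symm⟩
      have hw' : w'.length ≤ n := by simpa using hw
      set x := deltaWord Δ w' α with hx
      have hxI : x ∈ idealChain Δ α n := deltaWord_mem_idealChain Δ α hw'
      have h1 : f * x ∈ idealChain Δ α (n - 1) := hf _ hxI
      have h2 : Δ a (f * x) ∈ idealChain Δ α n := by
        have := deriv_mem_idealChain Δ α (n - 1) a h1
        rwa [Nat.sub_add_cancel hn] at this
      have h3 : x * Δ a f ∈ idealChain Δ α n := Ideal.mul_mem_right _ _ hxI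
      have key : f * Δ a x = Δ a (f * x) - x * Δ a f := by
        rw [Derivation.leibniz, smul_eq_mul, smul_eq_mul]; ring
      rw [deltaWord_append_singleton, key]
      exact sub_mem h2 h3
  · simp
  · exact fun x y _ _ hx hy => by rw [mul_add]; exact add_mem hx hy
  · exact fun r x _ hx => by
      rw [smul_eq_mul, ← mul_assoc, mul_comm f r, mul_assoc]
      exact Ideal.mul_mem_left _ _ hx
end

section
/- The map sending a commutative series f : Σ* → ℚ (with Σ of size d) to the power series Φ(f) := Σ_{n ∈ ℕ^d} f_{w_n} · x^n/n! (where w_n is any word with Parikh image n) is a ring homomorphism from the shuffle ring of commutative series to ℚ[[x_1,…,x_d]]: Φ(f + g) = Φ(f) + Φ(g) and Φ(f ⧢ g) = Φ(f) · Φ(g). -/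
/-- The subword of `w` at the positions in `s`, taken in increasing order. -/
def select {α : Type*} (w : List α) (s : Finset (Fin w.length)) : List α :=
  ((List.finRange w.length).filter (fun i => i ∈ s)).map w.get

/-- The shuffle product of series: `(f ⧢ g)_w = Σ_{w ∈ u ⧢ v} f_u · g_v`. -/
noncomputable def shuffleMul {α : Type*} (f g : List α → ℚ) : List α → ℚ :=
  fun w => ∑ s : Finset (Fin w.length), f (select w s) * g (select w sᶜ)

/-- The Parikh image of a word. -/
def parikh {d : ℕ} (w : List (Fin d)) : Fin d → ℕ := fun j => w.count j

/-- A canonical word with Parikh image `n`. -/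
def wordOf {d : ℕ} (n : Fin d →₀ ℕ) : List (Fin d) :=
  (List.finRange d).flatMap fun j => List.replicate (n j) j

/-- The transfer map from commutative series to power series:
`Φ(f) = Σ_{n ∈ ℕ^d} f_{w_n} · x^n/n!` where `w_n` is any word with Parikh image `n`. -/
noncomputable def seriesToPS {d : ℕ} (f : List (Fin d) → ℚ) : MvPowerSeries (Fin d) ℚ :=
  fun n => f (wordOf n) / (n.prod fun _ e => (e.factorial : ℚ))

/-! ### Auxiliary lemmas -/

/-- The Parikh image, as a finitely supported function. -/
noncomputable def pk {d : ℕ} (u : List (Fin d)) : Fin d →₀ ℕ :=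
  Finsupp.equivFunOnFinite.symm (parikh u)

lemma coe_pk {d : ℕ} (u : List (Fin d)) : ⇑(pk u) = parikh u := by
  funext j
  rfl

lemma pk_apply {d : ℕ} (u : List (Fin d)) (j : Fin d) : pk u j = u.count j := by
  rw [coe_pk]; rfl

lemma count_select {d : ℕ} (w : List (Fin d)) (s : Finset (Fin w.length)) (j : Fin d) :
    (select w s).count j = (s.filter (fun i => w.get i = j)).card := by
  classical
  rw [select, List.count_eq_countP, List.countP_map, List.countP_filter,
    List.countP_eq_length_filter]
  have h1 : s.filter (fun i => w.get i = j)
      = Finset.univ.filter (fun i => w.get i = j ∧ i ∈ s) := by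
    ext i; simp [and_comm]
  rw [h1]
  have h2 : (Finset.univ.filter (fun i => w.get i = j ∧ i ∈ s)).card
      = ((List.finRange w.length).filter (fun i => decide (w.get i = j ∧ i ∈ s))).length := rfl
  rw [h2]
  congr 1
  apply List.filter_congr
  intro a _
  simp [Bool.beq_eq_decide_eq]

lemma count_univ {d : ℕ} (w : List (Fin d)) (j : Fin d) :
    w.count j = (Finset.univ.filter (fun i : Fin w.length => w.get i = j)).card := by
  classical
  have := count_select w Finset.univ j
  rwa [show select w Finset.univ = w by
    rw [select, List.filter_congr (q := fun _ => true) (by simp), List.filter_true,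
      List.map_get_finRange]] at this

lemma parikh_wordOf {d : ℕ} (n : Fin d →₀ ℕ) : parikh (wordOf n) = n := by
  funext j
  rw [parikh, wordOf, List.count_flatMap]
  rw [show (List.count j ∘ fun j' => List.replicate (n j') j')
      = fun j' => if j = j' then n j' else 0 by
    funext j'; simp only [Function.comp_apply, List.count_replicate]
    by_cases h : j = j' <;> simp [h, Ne.symm]]
  have : (List.map (fun j' => if j = j' then n j' else 0) (List.finRange d)).sum
      = ∑ j' : Fin d, if j = j' then n j' else 0 := rfl
  rw [this, Finset.sum_ite_eq]
  simp

lemma pk_wordOf {d : ℕ} (n : Fin d →₀ ℕ) : pk (wordOf n) = n := by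
  have : parikh (wordOf n) = ⇑n := parikh_wordOf n
  rw [pk, this]
  exact Finsupp.equivFunOnFinite.symm_apply_apply n

lemma pk_select_add {d : ℕ} (w : List (Fin d)) (s : Finset (Fin w.length)) :
    pk (select w s) + pk (select w sᶜ) = pk w := by
  classical
  ext j
  simp only [Finsupp.add_apply, pk_apply, count_select]
  rw [← Finset.card_union_of_disjoint
      (Finset.disjoint_filter_filter disjoint_compl_right),
    ← Finset.filter_union, Finset.union_compl, ← count_univ]

lemma card_fiber {d : ℕ} (w : List (Fin d)) (k : Fin d →₀ ℕ) :
    (Finset.univ.filter (fun s : Finset (Fin w.length) => pk (select w s) = k)).card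
      = ∏ j : Fin d, (w.count j).choose (k j) := by
  classical
  have hmem : ∀ s : Finset (Fin w.length), pk (select w s) = k ↔
      ∀ j, (s.filter (fun i => w.get i = j)).card = k j := by
    intro s
    rw [Finsupp.ext_iff]
    refine forall_congr' fun j => ?_
    rw [pk_apply, count_select]
  have hF : ∀ (F : ∀ _ : Fin d, Finset (Fin w.length)),
      (F ∈ Fintype.piFinset fun j =>
        ((Finset.univ.filter (fun i : Fin w.length => w.get i = j)).powersetCard (k j))) →
      ∀ j, (Finset.univ.filter (fun i => i ∈ F (w.get i))).filter (fun i => w.get i = j)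
          = F j := by
    intro F hF j
    rw [Fintype.mem_piFinset] at hF
    ext i
    simp only [Finset.mem_filter, Finset.mem_univ, true_and]
    constructor
    · rintro ⟨hi, rfl⟩; exact hi
    · intro hi
      have hsub := (Finset.mem_powersetCard.1 (hF j)).1 hi
      rw [Finset.mem_filter] at hsub
      exact ⟨by rw [hsub.2]; exact hi, hsub.2⟩
  rw [show ∏ j : Fin d, (w.count j).choose (k j)
      = ∏ j : Fin d, ((Finset.univ.filter
          (fun i : Fin w.length => w.get i = j)).powersetCard (k j)).card by
    refine Finset.prod_congr rfl fun j _ => ?_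
    rw [Finset.card_powersetCard, ← count_univ],
    ← Fintype.card_piFinset]
  apply Finset.card_nbij' (fun s => fun j => s.filter (fun i => w.get i = j))
    (fun F => Finset.univ.filter (fun i => i ∈ F (w.get i)))
  · intro s hs
    rw [Finset.mem_coe, Finset.mem_filter] at hs
    rw [Finset.mem_coe, Fintype.mem_piFinset]
    intro j
    rw [Finset.mem_powersetCard]
    constructor
    · intro i hi; rw [Finset.mem_filter] at hi ⊢; exact ⟨Finset.mem_univ _, hi.2⟩
    · exact (hmem s).1 hs.2 j
  · intro F hFmem
    rw [Finset.mem_coe, Finset.mem_filter]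
    refine ⟨Finset.mem_univ _, (hmem _).2 fun j => ?_⟩
    rw [hF F hFmem j]
    rw [Finset.mem_coe, Fintype.mem_piFinset] at hFmem
    exact (Finset.mem_powersetCard.1 (hFmem j)).2
  · intro s _
    ext i
    simp
  · intro F hFmem
    funext j
    exact hF F hFmem j

lemma fact_prod_eq {d : ℕ} (n : Fin d →₀ ℕ) :
    (n.prod fun _ e => (e.factorial : ℚ)) = ∏ j : Fin d, ((n j).factorial : ℚ) :=
  Finsupp.prod_fintype _ _ (by simp)

/-- `Φ` is a ring homomorphism from the shuffle ring of commutative series to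
`ℚ[[x_1,…,x_d]]`: it sends pointwise sum to sum and shuffle product to Cauchy product. -/
theorem seriesToPS_hom {d : ℕ} (f g : List (Fin d) → ℚ)
    (hf : ∀ u v : List (Fin d), parikh u = parikh v → f u = f v)
    (hg : ∀ u v : List (Fin d), parikh u = parikh v → g u = g v) :
    seriesToPS (fun w => f w + g w) = seriesToPS f + seriesToPS g
      ∧ seriesToPS (shuffleMul f g) = seriesToPS f * seriesToPS g := by
  classical
  constructor
  · funext n
    show (f (wordOf n) + g (wordOf n)) / _ = seriesToPS f n + seriesToPS g n
    rw [add_div]; rfl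
  · funext n
    show shuffleMul f g (wordOf n) / _ = _
    have hmul : (seriesToPS f * seriesToPS g) n
        = ∑ p ∈ Finset.HasAntidiagonal.antidiagonal n,
            (f (wordOf p.1) / ∏ j : Fin d, ((p.1 j).factorial : ℚ))
            * (g (wordOf p.2) / ∏ j : Fin d, ((p.2 j).factorial : ℚ)) := by
      have : (seriesToPS f * seriesToPS g) n
          = MvPowerSeries.coeff n (seriesToPS f * seriesToPS g) := rfl
      rw [this, MvPowerSeries.coeff_mul]
      refine Finset.sum_congr rfl fun p _ => ?_
      show seriesToPS f p.1 * seriesToPS g p.2 = _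
      rw [seriesToPS, seriesToPS, fact_prod_eq, fact_prod_eq]
    rw [hmul, fact_prod_eq]
    set w := wordOf n with hw
    have hpkw : pk w = n := pk_wordOf n
    -- fiberwise splitting
    have hmaps : ∀ s : Finset (Fin w.length), s ∈ (Finset.univ : Finset (Finset (Fin w.length))) →
        (pk (select w s), pk (select w sᶜ)) ∈ Finset.HasAntidiagonal.antidiagonal n := by
      intro s _
      rw [Finset.HasAntidiagonal.mem_antidiagonal, pk_select_add, hpkw]
    have hsplit : shuffleMul f g w
        = ∑ p ∈ Finset.HasAntidiagonal.antidiagonal n,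
            ∑ s ∈ Finset.univ.filter
              (fun s : Finset (Fin w.length) => (pk (select w s), pk (select w sᶜ)) = p),
              f (select w s) * g (select w sᶜ) :=
      (Finset.sum_fiberwise_of_maps_to hmaps _).symm
    rw [hsplit, Finset.sum_div]
    refine Finset.sum_congr rfl fun p hp => ?_
    rw [Finset.HasAntidiagonal.mem_antidiagonal] at hp
    -- the fiber condition simplifies
    have hfiber : (Finset.univ.filter
        (fun s : Finset (Fin w.length) => (pk (select w s), pk (select w sᶜ)) = p))
        = Finset.univ.filter (fun s => pk (select w s) = p.1) := by
      refine Finset.filter_congr fun s _ => ?_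
      constructor
      · intro h; exact congrArg Prod.fst h
      · intro h
        have hadd : pk (select w s) + pk (select w sᶜ) = p.1 + p.2 := by
          rw [pk_select_add, hpkw, hp]
        rw [h] at hadd
        have : pk (select w sᶜ) = p.2 := by exact add_left_cancel hadd
        rw [h, this]
    rw [hfiber]
    -- each term in the fiber is constant
    have hconst : ∀ s ∈ Finset.univ.filter
        (fun s : Finset (Fin w.length) => pk (select w s) = p.1),
        f (select w s) * g (select w sᶜ) = f (wordOf p.1) * g (wordOf p.2) := by
      intro s hs
      rw [Finset.mem_filter] at hs
      have h1 : pk (select w s) = p.1 := hs.2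
      have h2 : pk (select w sᶜ) = p.2 := by
        have hadd : pk (select w s) + pk (select w sᶜ) = p.1 + p.2 := by
          rw [pk_select_add, hpkw, hp]
        rw [h1] at hadd
        exact add_left_cancel hadd
      rw [hf (select w s) (wordOf p.1) (by rw [parikh_wordOf, ← h1, coe_pk]),
        hg (select w sᶜ) (wordOf p.2) (by rw [parikh_wordOf, ← h2, coe_pk])]
    rw [Finset.sum_congr rfl hconst, Finset.sum_const, card_fiber, nsmul_eq_mul]
    -- now the numerical identity
    have hcount : ∀ j : Fin d, w.count j = n j := by
      intro j
      have := congrFun (parikh_wordOf n) j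
      exact this
    have hle : ∀ j : Fin d, p.1 j ≤ n j := by
      intro j
      rw [← hp]
      exact Nat.le_add_right _ _
    have hfact : ∀ j : Fin d, (n j).factorial
        = (n j).choose (p.1 j) * ((p.1 j).factorial * (p.2 j).factorial) := by
      intro j
      have h2 : p.2 j = n j - p.1 j := by
        rw [← hp]; simp
      rw [h2, ← Nat.choose_mul_factorial_mul_factorial (hle j), mul_assoc]
    have hprod : (∏ j : Fin d, ((n j).factorial : ℚ))
        = (∏ j : Fin d, ((w.count j).choose (p.1 j) : ℚ))
          * ((∏ j : Fin d, ((p.1 j).factorial : ℚ))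
            * (∏ j : Fin d, ((p.2 j).factorial : ℚ))) := by
      rw [← Finset.prod_mul_distrib, ← Finset.prod_mul_distrib]
      refine Finset.prod_congr rfl fun j _ => ?_
      rw [hcount j]
      exact_mod_cast congrArg (Nat.cast (R := ℚ)) (hfact j)
    have hne1 : (∏ j : Fin d, ((p.1 j).factorial : ℚ)) ≠ 0 :=
      Finset.prod_ne_zero_iff.2 fun j _ => Nat.cast_ne_zero.2 (Nat.factorial_ne_zero _)
    have hne2 : (∏ j : Fin d, ((p.2 j).factorial : ℚ)) ≠ 0 :=
      Finset.prod_ne_zero_iff.2 fun j _ => Nat.cast_ne_zero.2 (Nat.factorial_ne_zero _)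
    have hcast : ((∏ j : Fin d, (w.count j).choose (p.1 j) : ℕ) : ℚ)
        = ∏ j : Fin d, ((w.count j).choose (p.1 j) : ℚ) := by push_cast; rfl
    rw [hcast, hprod]
    have hcne : (∏ j : Fin d, ((w.count j).choose (p.1 j) : ℚ)) ≠ 0 := by
      refine Finset.prod_ne_zero_iff.2 fun j _ => ?_
      rw [hcount j]
      exact Nat.cast_ne_zero.2 (Nat.choose_pos (hle j)).ne'
    field_simp
end

section
/- Let f ∈ ℚ[[x_1,…,x_d]]^k be a tuple of power series with f(0) = 0 satisfying the polynomial differential system ∂_{x_j} f^{(i)} = P_{ij}(f) for polynomials P_{ij} = q^{-1} Q_{ij} with Q_{ij} ∈ ℤ[y_1,…,y_k] and q a positive integer. Then for every multi-index n ∈ ℕ^d, the coefficient vector q^{|n|} · [x^n] f lies in ℤ^k, where |n| = n_1 + ⋯ + n_d and [x^n] f is the exponential coefficient (so f = Σ_n ([x^n]f) x^n/n!). -/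
/-- Formal partial derivative `∂_{x_j}` of a multivariate power series. -/
noncomputable def pderiv {σ : Type*} [DecidableEq σ] (j : σ)
    (f : MvPowerSeries σ ℚ) : MvPowerSeries σ ℚ :=
  fun n => ((n j : ℚ) + 1) * MvPowerSeries.coeff (n + Finsupp.single j 1) f

/-- Exponential coefficient extraction: `[x^n] f = f_n` where `f = Σ f_n · x^n/n!`. -/
noncomputable def ecoeff {d : ℕ} (n : Fin d →₀ ℕ) (f : MvPowerSeries (Fin d) ℚ) : ℚ :=
  (n.prod fun _ e => (e.factorial : ℚ)) * MvPowerSeries.coeff n f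

/-- The image of `ℤ` in `ℚ`, as a subring. -/
def Zr : Subring ℚ := (Int.castRingHom ℚ).range

lemma natCast_mem_Zr (n : ℕ) : (n : ℚ) ∈ Zr := ⟨(n : ℤ), by simp⟩

lemma mem_Zr_iff (x : ℚ) : x ∈ Zr ↔ ∃ z : ℤ, x = (z : ℚ) := by
  constructor
  · rintro ⟨z, hz⟩; exact ⟨z, hz.symm⟩
  · rintro ⟨z, hz⟩; exact ⟨z, hz.symm⟩

/-- Key lemma: integrality of coefficients of a polynomial evaluated at `f`,
given integrality of the coefficients of `f` up to total degree `N`. -/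
lemma poly_coeff_mem {d k : ℕ} (f : Fin k → MvPowerSeries (Fin d) ℚ) (q : ℕ) (N : ℕ)
    (IH : ∀ m : Fin d →₀ ℕ, (∑ t, m t) ≤ N → ∀ i : Fin k,
      (q : ℚ) ^ (∑ t, m t) * (∏ t, ((m t).factorial : ℚ)) *
        MvPowerSeries.coeff m (f i) ∈ Zr)
    (P : MvPolynomial (Fin k) ℤ) :
    ∀ m : Fin d →₀ ℕ, (∑ t, m t) ≤ N →
      (q : ℚ) ^ (∑ t, m t) * (∏ t, ((m t).factorial : ℚ)) *
        MvPowerSeries.coeff m (MvPolynomial.aeval f P) ∈ Zr := by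
  induction P using MvPolynomial.induction_on with
  | C a =>
      intro m hm
      have : (MvPolynomial.aeval f (MvPolynomial.C a) : MvPowerSeries (Fin d) ℚ)
          = MvPowerSeries.C ((a : ℤ) : ℚ) := by
        simp [MvPolynomial.aeval_C]
      rw [this, MvPowerSeries.coeff_C]
      by_cases h : m = 0
      · subst h
        simp only [if_pos rfl]
        refine Subring.mul_mem _ (Subring.mul_mem _ ?_ ?_) ?_
        · exact Subring.pow_mem _ (natCast_mem_Zr q) _
        · exact Subring.prod_mem _ fun t _ => natCast_mem_Zr _
        · exact ⟨a, rfl⟩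
      · simp only [if_neg h, mul_zero]
        exact Subring.zero_mem _
  | add p₁ p₂ h₁ h₂ =>
      intro m hm
      rw [map_add, map_add, mul_add]
      exact Subring.add_mem _ (h₁ m hm) (h₂ m hm)
  | mul_X p s hp =>
      intro m hm
      rw [map_mul, MvPolynomial.aeval_X, MvPowerSeries.coeff_mul, Finset.mul_sum]
      refine Subring.sum_mem _ fun uv huv => ?_
      obtain ⟨u, v⟩ := uv
      have huvm : u + v = m := Finset.HasAntidiagonal.mem_antidiagonal.mp huv
      have hS : (∑ t, u t) + (∑ t, v t) = ∑ t, m t := by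
        rw [← huvm, ← Finset.sum_add_distrib]
        rfl
      have hfact : (∏ t, ((m t).factorial : ℚ))
          = (∏ t, ((m t).choose (v t) : ℚ)) *
            ((∏ t, ((u t).factorial : ℚ)) * (∏ t, ((v t).factorial : ℚ))) := by
        rw [← Finset.prod_mul_distrib, ← Finset.prod_mul_distrib]
        refine Finset.prod_congr rfl fun t _ => ?_
        have ht : u t + v t = m t := by rw [← huvm]; rfl
        rw [← ht]
        have hcf := Nat.add_choose_mul_factorial_mul_factorial (u t) (v t)
        push_cast [← hcf]
        ring
      have key : (q : ℚ) ^ (∑ t, m t) * (∏ t, ((m t).factorial : ℚ)) *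
            (MvPowerSeries.coeff u (MvPolynomial.aeval f p) *
              MvPowerSeries.coeff v (f s))
          = (∏ t, ((m t).choose (v t) : ℚ)) *
            (((q : ℚ) ^ (∑ t, u t) * (∏ t, ((u t).factorial : ℚ)) *
              MvPowerSeries.coeff u (MvPolynomial.aeval f p)) *
             ((q : ℚ) ^ (∑ t, v t) * (∏ t, ((v t).factorial : ℚ)) *
              MvPowerSeries.coeff v (f s))) := by
        rw [hfact, ← hS, pow_add]
        ring
      rw [key]
      refine Subring.mul_mem _ (Subring.prod_mem _ fun t _ => natCast_mem_Zr _) ?_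
      refine Subring.mul_mem _ ?_ ?_
      · exact hp u (le_trans (by omega) hm)
      · exact IH v (le_trans (by omega) hm) s

/-- Let `f ∈ ℚ[[x_1,…,x_d]]^k` with `f(0) = 0` satisfy the polynomial differential
system `∂_{x_j} f^{(i)} = q⁻¹ · Q_{ij}(f)` with `Q_{ij} ∈ ℤ[y_1,…,y_k]` and `q` a
positive integer.  Then `q^{|n|} · [x^n] f ∈ ℤ^k` for every multi-index `n`. -/
theorem cdf_denominator_bound {d k : ℕ} (f : Fin k → MvPowerSeries (Fin d) ℚ)
    (hf0 : ∀ i : Fin k, MvPowerSeries.constantCoeff (f i) = 0)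
    (Q : Fin k → Fin d → MvPolynomial (Fin k) ℤ) (q : ℕ) (hq : 0 < q)
    (hsys : ∀ (i : Fin k) (j : Fin d),
      (q : MvPowerSeries (Fin d) ℚ) * pderiv j (f i) = MvPolynomial.aeval f (Q i j)) :
    ∀ (n : Fin d →₀ ℕ) (i : Fin k), ∃ z : ℤ,
      (q : ℚ) ^ (n.sum fun _ e => e) * ecoeff n (f i) = (z : ℚ) := by
  have key : ∀ N : ℕ, ∀ n : Fin d →₀ ℕ, (∑ t, n t) ≤ N → ∀ i : Fin k,
      (q : ℚ) ^ (∑ t, n t) * (∏ t, ((n t).factorial : ℚ)) *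
        MvPowerSeries.coeff n (f i) ∈ Zr := by
    intro N
    induction N with
    | zero =>
        intro n hn i
        have hn0 : n = 0 := by
          ext t
          have := (Finset.sum_eq_zero_iff.mp (Nat.le_zero.mp hn)) t (Finset.mem_univ t)
          simpa using this
        subst hn0
        rw [MvPowerSeries.coeff_zero_eq_constantCoeff, hf0 i, mul_zero]
        exact Subring.zero_mem _
    | succ N ih =>
        intro n hn i
        rcases le_or_gt (∑ t, n t) N with h | h
        · exact ih n h i
        have hsn : (∑ t, n t) = N + 1 := by omega
        have hex : ∃ j : Fin d, 0 < n j := by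
          by_contra hc
          push_neg at hc
          have : (∑ t, n t) = 0 := Finset.sum_eq_zero fun t _ => Nat.le_zero.mp (hc t)
          omega
        obtain ⟨j, hj⟩ := hex
        set m : Fin d →₀ ℕ := n - Finsupp.single j 1 with hm
        have hle : Finsupp.single j 1 ≤ n := Finsupp.single_le_iff.mpr hj
        have hmn : m + Finsupp.single j 1 = n := tsub_add_cancel_of_le hle
        have hmt : ∀ t, t ≠ j → m t = n t := by
          intro t ht
          have := congrFun (congrArg (fun g : Fin d →₀ ℕ => (g : Fin d → ℕ)) hmn) t
          simpa [Finsupp.single_apply, (Ne.symm ht)] using this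
        have hmj : m j + 1 = n j := by
          have := congrFun (congrArg (fun g : Fin d →₀ ℕ => (g : Fin d → ℕ)) hmn) j
          simpa [Finsupp.single_apply] using this
        have hSm : (∑ t, m t) + 1 = ∑ t, n t := by
          have : ∀ t, n t = m t + (Finsupp.single j 1) t := by
            intro t; rw [← hmn]; rfl
          rw [Finset.sum_congr rfl fun t _ => this t, Finset.sum_add_distrib]
          congr 1
          simp [Finsupp.single_apply]
        -- coefficient relation from the differential system
        have h1 : (q : ℚ) * (((m j : ℚ) + 1) * MvPowerSeries.coeff n (f i))
            = MvPowerSeries.coeff m (MvPolynomial.aeval f (Q i j)) := by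
          have hc := congrArg (MvPowerSeries.coeff m) (hsys i j)
          have hq' : ((q : ℕ) : MvPowerSeries (Fin d) ℚ)
              = MvPowerSeries.C ((q : ℕ) : ℚ) := by
            rw [map_natCast]
          rw [hq', MvPowerSeries.coeff_C_mul] at hc
          have hpd : MvPowerSeries.coeff m (pderiv j (f i))
              = ((m j : ℚ) + 1) * MvPowerSeries.coeff (m + Finsupp.single j 1) (f i) := rfl
          rw [hpd, hmn] at hc
          exact hc
        -- factorial relation
        have hfact : (∏ t, ((n t).factorial : ℚ))
            = (n j : ℚ) * ∏ t, ((m t).factorial : ℚ) := by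
          rw [← Finset.mul_prod_erase Finset.univ (fun t => ((n t).factorial : ℚ))
              (Finset.mem_univ j),
            ← Finset.mul_prod_erase Finset.univ (fun t => ((m t).factorial : ℚ))
              (Finset.mem_univ j)]
          have h2 : ((n j).factorial : ℚ) = (n j : ℚ) * ((m j).factorial : ℚ) := by
            rw [← hmj, Nat.factorial_succ]
            push_cast
            ring
          rw [h2]
          have h3 : ∏ t ∈ Finset.univ.erase j, ((n t).factorial : ℚ)
              = ∏ t ∈ Finset.univ.erase j, ((m t).factorial : ℚ) := by
            refine Finset.prod_congr rfl fun t ht => ?_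
            rw [hmt t (Finset.ne_of_mem_erase ht)]
          rw [h3]
          ring
        have hkey : (q : ℚ) ^ (∑ t, n t) * (∏ t, ((n t).factorial : ℚ)) *
              MvPowerSeries.coeff n (f i)
            = (q : ℚ) ^ (∑ t, m t) * (∏ t, ((m t).factorial : ℚ)) *
              MvPowerSeries.coeff m (MvPolynomial.aeval f (Q i j)) := by
          rw [← h1, ← hSm, pow_succ, hfact]
          have : ((m j : ℚ) + 1) = (n j : ℚ) := by
            rw [← hmj]; push_cast; ring
          rw [this]
          ring
        rw [hkey]
        exact poly_coeff_mem f q N ih (Q i j) m (by omega) 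
  intro n i
  have h := key (∑ t, n t) n le_rfl i
  rw [mem_Zr_iff] at h
  obtain ⟨z, hz⟩ := h
  refine ⟨z, ?_⟩
  rw [ecoeff, Finsupp.sum_fintype _ _ (fun _ => rfl),
    Finsupp.prod_fintype _ _ (fun _ => rfl), ← mul_assoc, hz]
end
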